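/- Takahashi's decomposition theorem: for any context-free grammar G, Trees(G) = ⋃_{T ∈ sTrees(G)} Adj(T, sLoops(G)), where sTrees(G) is the (finite) set of simple trees arising as first components of decompositions of derivation trees, and sLoops(G) is the (finite) set of simple adjunct trees arising in second components of such decompositions. -/

import Mathlib

/-- Trees whose internal nodes are labeled by nonterminals in `V`
and whose leaves are labeled by elements of `L`. -/
inductive PTree (V L : Type) : Type
  | leaf : L → PTree V L
  | node : V → List (PTree V L) → PTree V L

namespace PTree

variable {V A L : Type}

/-- Leaf alphabet for contexts/adjunct trees: a letter-or-ε leaf, or the hole. -/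
abbrev Aug (A : Type) := Option A ⊕ Unit

/-- The root label of a tree: a nonterminal or a leaf label. -/
def rootLabel : PTree V L → V ⊕ L
  | .leaf a => .inr a
  | .node X _ => .inl X

/-- Set of nonterminals occurring in a tree. -/
def ntSet : PTree V L → Set V
  | .leaf _ => ∅
  | .node X ts => insert X ((ts.attach.map (fun ⟨t, _⟩ => ntSet t)).foldr (· ∪ ·) ∅)

/-- A tree is simple if no nonterminal occurs twice on a root-to-leaf path. -/
def Simple : PTree V L → Prop
  | .leaf _ => True
  | .node X ts => ∀ t ∈ ts, X ∉ ntSet t ∧ Simple t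

/-- Number of holes in a context / adjunct tree. -/
def holes : PTree V (Aug A) → ℕ
  | .leaf (.inr _) => 1
  | .leaf (.inl _) => 0
  | .node _ ts => (ts.attach.map (fun ⟨t, _⟩ => holes t)).sum

/-- Substitute the tree `T` for every hole. -/
def subst (T : PTree V (Option A)) : PTree V (Aug A) → PTree V (Option A)
  | .leaf (.inl a) => .leaf a
  | .leaf (.inr _) => T
  | .node X ts => .node X (ts.attach.map (fun ⟨t, _⟩ => subst T t))

/-- Embed a `(V,A)`-tree into trees with holes (no holes created). -/
def toAug : PTree V (Option A) → PTree V (Aug A)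
  | .leaf a => .leaf (.inl a)
  | .node X ts => .node X (ts.attach.map (fun ⟨t, _⟩ => toAug t))

/-- Yield of a `(V,A)`-tree. -/
def yield : PTree V (Option A) → List A
  | .leaf none => []
  | .leaf (some a) => [a]
  | .node _ ts => (ts.attach.map (fun ⟨t, _⟩ => yield t)).flatten

/-- Yield of a context / adjunct tree, holes contributing `ε`. -/
def yieldA : PTree V (Aug A) → List A
  | .leaf (.inl none) => []
  | .leaf (.inl (some a)) => [a]
  | .leaf (.inr _) => []
  | .node _ ts => (ts.attach.map (fun ⟨t, _⟩ => yieldA t)).flatten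

/-- Height of a tree. -/
def height : PTree V L → ℕ
  | .leaf _ => 0
  | .node _ ts => (ts.attach.map (fun ⟨t, _⟩ => height t)).foldr max 0 + 1

/-- Size (number of nodes) of a tree. -/
def tsize : PTree V L → ℕ
  | .leaf _ => 1
  | .node _ ts => (ts.attach.map (fun ⟨t, _⟩ => tsize t)).sum + 1

end PTree

open PTree

/-- A context-free grammar over `A` with nonterminals `V`:
a finite set of rules `D ⊆ V × (V ∪ A ∪ {ε})⁺` and a start symbol. -/
structure CFG (V A : Type) where
  rules : Set (V × List (V ⊕ Option A))
  rules_fin : rules.Finite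
  start : V

variable {V A : Type}

/-- A tree is a valid derivation w.r.t. the rules `D`. -/
inductive IsDeriv (D : Set (V × List (V ⊕ Option A))) : PTree V (Option A) → Prop
  | leaf (a : Option A) : IsDeriv D (.leaf a)
  | node (X : V) (ts : List (PTree V (Option A))) :
      (X, ts.map rootLabel) ∈ D → (∀ t ∈ ts, IsDeriv D t) → IsDeriv D (.node X ts)

/-- The set `Trees(G)` of derivation trees of `G`. -/
def TreesSet (G : CFG V A) : Set (PTree V (Option A)) :=
  {T | T.rootLabel = .inl G.start ∧ IsDeriv G.rules T}

/-- The language of `G`: yields of derivation trees. -/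
def lang (G : CFG V A) : Set (List A) := PTree.yield '' TreesSet G

/-- An adjunct tree is represented by its root nonterminal `X` together with a tree
over `V, A ∪ {X}` (the distinguished leaf `X` being the hole). -/
abbrev AdjT (V A : Type) := V × PTree V (Aug A)

/-- Wellformedness of an adjunct tree: root node labeled `X`, exactly one `X`-leaf. -/
def WFAdjunct (p : AdjT V A) : Prop :=
  (∃ ts, p.2 = PTree.node p.1 ts) ∧ p.2.holes = 1

/-- A simple adjunct tree: no nonterminal repeats on paths from a child of the root. -/
def SimpleAdjunct (p : AdjT V A) : Prop :=
  ∃ ts, p.2 = PTree.node p.1 ts ∧ ∀ t ∈ ts, Simple t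

/-- Root label of a subtree of an adjunct tree with root nonterminal `X`:
the hole leaf is labeled `X`. -/
def augRoot (X : V) : PTree V (Aug A) → V ⊕ Option A
  | .leaf (.inl a) => .inr a
  | .leaf (.inr _) => .inl X
  | .node Y _ => .inl Y

/-- An adjunct tree is extracted from derivation trees of `D`: every internal
node respects the rules. -/
inductive IsDerivA (D : Set (V × List (V ⊕ Option A))) (X : V) : PTree V (Aug A) → Prop
  | leaf (a : Aug A) : IsDerivA D X (.leaf a)
  | node (Y : V) (ts : List (PTree V (Aug A))) :
      (Y, ts.map (augRoot X)) ∈ D → (∀ t ∈ ts, IsDerivA D X t) → IsDerivA D X (.node Y ts)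

/-- `T ⊢_α T'` : `T'` is obtained from `T` by adjoining the adjunct tree `α`
at some occurrence of its root nonterminal. -/
def Adjoins (α : AdjT V A) (T T' : PTree V (Option A)) : Prop :=
  WFAdjunct α ∧
  ∃ (C : PTree V (Aug A)) (ts : List (PTree V (Option A))),
    C.holes = 1 ∧
    subst (.node α.1 ts) C = T ∧
    subst (subst (.node α.1 ts) α.2) C = T'

/-- `AdjChain L T T'` : `T'` is obtained from `T` by successively adjoining
the adjunct trees listed in `L`. -/
def AdjChain : List (AdjT V A) → PTree V (Option A) → PTree V (Option A) → Prop
  | [], T, T' => T = T'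
  | α :: L, T, T' => ∃ T₁, Adjoins α T T₁ ∧ AdjChain L T₁ T'

/-- `Adj⁺(T,S)` : trees obtained from `T` using exactly the adjunct trees of `S`,
each at least once. -/
def AdjPlus (T : PTree V (Option A)) (S : Set (AdjT V A)) : Set (PTree V (Option A)) :=
  {T' | ∃ L : List (AdjT V A), AdjChain L T T' ∧ {α | α ∈ L} = S}

/-- `Adj(T,S)` : trees obtained from `T` using adjunct trees of `S`, arbitrarily often. -/
def AdjStar (T : PTree V (Option A)) (S : Set (AdjT V A)) : Set (PTree V (Option A)) :=
  {T' | ∃ L : List (AdjT V A), AdjChain L T T' ∧ {α | α ∈ L} ⊆ S}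

namespace PTree
variable [DecidableEq V]

mutual
/-- Find the leftmost `X`-rooted subtree: returns the surrounding context
(with a hole in its place) and the subtree. -/
def extract (X : V) : PTree V (Option A) → Option (PTree V (Aug A) × PTree V (Option A))
  | .leaf _ => none
  | .node Y ts =>
    if Y = X then some (.leaf (.inr ()), .node Y ts)
    else match extractL X ts with
      | none => none
      | some (Cs, sub) => some (.node Y Cs, sub)

/-- List version of `extract`. -/
def extractL (X : V) : List (PTree V (Option A)) → Option (List (PTree V (Aug A)) × PTree V (Option A))
  | [] => none
  | t :: ts =>
    match extract X t with
    | some (C, sub) => some (C :: ts.map toAug, sub)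
    | none =>
      match extractL X ts with
      | some (Cs, sub) => some (toAug t :: Cs, sub)
      | none => none
end

/-- Takahashi's decomposition of a tree into a simple tree and a set of
simple adjunct trees. -/
def decomp : PTree V (Option A) → PTree V (Option A) × Set (AdjT V A)
  | .leaf a => (.leaf a, ∅)
  | .node X ts =>
    let rs := ts.attach.map (fun ⟨t, _⟩ => decomp t)
    let S := (rs.map Prod.snd).foldr (· ∪ ·) ∅
    match extractL X (rs.map Prod.fst) with
    | none => (.node X (rs.map Prod.fst), S)
    | some (Cs, sub) => (sub, insert (X, PTree.node X Cs) S)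

end PTree

/-- The simple trees arising from decompositions of derivation trees. -/
def sTrees (G : CFG V A) [DecidableEq V] : Set (PTree V (Option A)) :=
  {T' | ∃ T ∈ TreesSet G, (decomp T).1 = T'}

/-- The simple adjunct trees arising from decompositions of derivation trees. -/
def sLoops (G : CFG V A) [DecidableEq V] : Set (AdjT V A) :=
  {α | ∃ T ∈ TreesSet G, α ∈ (decomp T).2}

/-- Parikh map. -/
def parikh [DecidableEq A] (w : List A) : A → ℕ := fun a => w.count a

/-- Linear subsets of `ℕ^A`. -/
def IsLinear (S : Set (A → ℕ)) : Prop :=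
  ∃ (v₀ : A → ℕ) (k : ℕ) (v : Fin k → A → ℕ),
    S = {u | ∃ x : Fin k → ℕ, u = v₀ + ∑ i, x i • v i}

/-- Semilinear subsets of `ℕ^A`: finite unions of linear sets. -/
def IsSemilinear (S : Set (A → ℕ)) : Prop :=
  ∃ (n : ℕ) (f : Fin n → Set (A → ℕ)), (∀ i, IsLinear (f i)) ∧ S = ⋃ i, f i
section Takahashi
open PTree
variable {V A : Type} [DecidableEq V]

@[simp] lemma attach_map'' {α β : Type _} (ts : List α) (f : α → β) :
    ts.attach.map (fun ⟨t, _⟩ => f t) = ts.map f := by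
  simp

omit [DecidableEq V] in
lemma tsize_lt {t : PTree V A} {X ts} (h : t ∈ ts) :
    tsize t < tsize (PTree.node X ts) := by
  rw [tsize]; simp only [attach_map'']
  have := List.single_le_sum (l := ts.map tsize) (by simp) (tsize t) (by simp; exact ⟨t, h, rfl⟩)
  omega

omit [DecidableEq V] in
lemma ptree_ind {L : Type} (P : PTree V L → Prop)
    (hleaf : ∀ a, P (.leaf a))
    (hnode : ∀ X ts, (∀ t ∈ ts, P t) → P (.node X ts)) : ∀ t, P t := by
  suffices h : ∀ n (t : PTree V L), tsize t < n → P t from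
    fun t => h (tsize t + 1) t (Nat.lt_succ_self _)
  intro n
  induction n with
  | zero => omega
  | succ n ih =>
    intro t ht
    cases t with
    | leaf a => exact hleaf a
    | node X ts =>
      exact hnode X ts (fun t' ht' => ih t' (by have := tsize_lt (X := X) ht'; omega))

end Takahashi
section Takahashi2
open PTree
variable {V A : Type} [DecidableEq V]

omit [DecidableEq V] in
@[simp] lemma subst_node (U : PTree V (Option A)) (X : V) (ts) :
    subst U (.node X ts) = .node X (ts.map (subst U)) := by
  rw [subst]; simp

omit [DecidableEq V] in
@[simp] lemma subst_leaf_inl (U : PTree V (Option A)) (a : Option A) :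
    subst U (.leaf (.inl a)) = .leaf a := by rw [subst]

omit [DecidableEq V] in
@[simp] lemma subst_leaf_inr (U : PTree V (Option A)) (u : Unit) :
    subst U (.leaf (.inr u)) = U := by rw [subst]

omit [DecidableEq V] in
@[simp] lemma holes_node (X : V) (ts : List (PTree V (Aug A))) :
    holes (PTree.node X ts) = (ts.map holes).sum := by rw [holes]; simp

omit [DecidableEq V] in
@[simp] lemma holes_leaf_inl (a : Option A) :
    holes (PTree.leaf (V := V) (.inl a)) = 0 := by rw [holes]

omit [DecidableEq V] in
@[simp] lemma holes_leaf_inr (u : Unit) :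
    holes (PTree.leaf (V := V) (L := Aug A) (.inr u)) = 1 := by rw [holes]

omit [DecidableEq V] in
@[simp] lemma toAug_node (X : V) (ts : List (PTree V (Option A))) :
    toAug (PTree.node X ts) = .node X (ts.map toAug) := by rw [toAug]; simp

omit [DecidableEq V] in
@[simp] lemma toAug_leaf (a : Option A) :
    toAug (PTree.leaf (V := V) a) = .leaf (.inl a) := by rw [toAug]

omit [DecidableEq V] in
@[simp] lemma holes_toAug (t : PTree V (Option A)) : holes (toAug t) = 0 := by
  induction t using ptree_ind with
  | hleaf a => simp
  | hnode X ts ih =>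
    simp only [toAug_node, holes_node, List.map_map]
    apply List.sum_eq_zero
    intro x hx
    obtain ⟨t, ht, rfl⟩ := List.mem_map.1 hx
    exact ih t ht

omit [DecidableEq V] in
@[simp] lemma subst_toAug (U : PTree V (Option A)) (t : PTree V (Option A)) :
    subst U (toAug t) = t := by
  induction t using ptree_ind with
  | hleaf a => simp
  | hnode X ts ih =>
    simp only [toAug_node, subst_node, List.map_map]
    congr 1
    conv_rhs => rw [← List.map_id ts]
    exact List.map_congr_left fun t ht => ih t ht

omit [DecidableEq V] in
@[simp] lemma rootLabel_leaf (a : A) : rootLabel (PTree.leaf (V := V) a) = .inr a := rfl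
omit [DecidableEq V] in
@[simp] lemma rootLabel_node (X : V) (ts : List (PTree V A)) :
    rootLabel (PTree.node X ts) = .inl X := rfl

omit [DecidableEq V] in
lemma rootLabel_subst {U U' : PTree V (Option A)} (h : rootLabel U = rootLabel U')
    (C : PTree V (Aug A)) : rootLabel (subst U C) = rootLabel (subst U' C) := by
  cases C with
  | leaf a => rcases a with a | u <;> simp [h]
  | node Y cs => simp

end Takahashi2
section Takahashi3
open PTree
variable {V A : Type} [DecidableEq V] {D : Set (V × List (V ⊕ Option A))}

omit [DecidableEq V] in
lemma isDeriv_node_iff {X : V} {ts : List (PTree V (Option A))} :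
    IsDeriv D (.node X ts) ↔ (X, ts.map rootLabel) ∈ D ∧ ∀ t ∈ ts, IsDeriv D t := by
  constructor
  · rintro (_ | ⟨_, _, h1, h2⟩); exact ⟨h1, h2⟩
  · rintro ⟨h1, h2⟩; exact .node X ts h1 h2

omit [DecidableEq V] in
/-- Replacing the plugged tree by one with the same root label preserves derivations. -/
lemma isDeriv_repl {U U' : PTree V (Option A)} (hroot : rootLabel U = rootLabel U')
    (hU' : IsDeriv D U') :
    ∀ C : PTree V (Aug A), IsDeriv D (subst U C) → IsDeriv D (subst U' C) := by
  intro C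
  induction C using ptree_ind with
  | hleaf a =>
    rcases a with a | u
    · intro _; simpa using IsDeriv.leaf a
    · intro _; simpa using hU'
  | hnode Y cs ih =>
    intro h
    simp only [subst_node] at h ⊢
    rw [isDeriv_node_iff] at h ⊢
    refine ⟨?_, ?_⟩
    · have : (cs.map (subst U')).map rootLabel = (cs.map (subst U)).map rootLabel := by
        simp only [List.map_map]
        exact List.map_congr_left fun c _ => (rootLabel_subst hroot c).symm
      rw [this]; exact h.1
    · intro t' ht'
      obtain ⟨c, hc, rfl⟩ := List.mem_map.1 ht'
      exact ih c hc (h.2 _ (List.mem_map_of_mem hc))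

omit [DecidableEq V] in
/-- If a context has a hole, the plugged tree is a subtree, hence derivable. -/
lemma isDeriv_of_subst {U : PTree V (Option A)} :
    ∀ C : PTree V (Aug A), 1 ≤ holes C → IsDeriv D (subst U C) → IsDeriv D U := by
  intro C
  induction C using ptree_ind with
  | hleaf a =>
    rcases a with a | u
    · simp
    · intro _ h; simpa using h
  | hnode Y cs ih =>
    intro hh h
    simp only [holes_node] at hh
    have : ∃ c ∈ cs, 1 ≤ holes c := by
      by_contra hc
      push_neg at hc
      have : (cs.map holes).sum = 0 := List.sum_eq_zero (by
        intro x hx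
        obtain ⟨c, hcc, rfl⟩ := List.mem_map.1 hx
        have := hc c hcc
        omega)
      omega
    obtain ⟨c, hc, hc1⟩ := this
    simp only [subst_node, isDeriv_node_iff] at h
    exact ih c hc hc1 (h.2 _ (List.mem_map_of_mem hc))

end Takahashi3
section Takahashi4
open PTree
variable {V A : Type} [DecidableEq V]

def ExtractSpec (X : V) (t : PTree V (Option A)) : Prop :=
  ∀ C sub, extract X t = some (C, sub) →
    (∃ ts₀, sub = PTree.node X ts₀) ∧ holes C = 1 ∧ subst sub C = t

lemma extractL_spec_aux (X : V) :
    ∀ ts : List (PTree V (Option A)), (∀ t ∈ ts, ExtractSpec X t) →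
    ∀ Cs sub, extractL X ts = some (Cs, sub) →
      (∃ ts₀, sub = PTree.node X ts₀) ∧ (Cs.map holes).sum = 1 ∧ Cs.map (subst sub) = ts := by
  intro ts
  induction ts with
  | nil => intro _ Cs sub h; simp [extractL] at h
  | cons t ts ih =>
    intro hP Cs sub h
    rw [extractL] at h
    cases he : extract X t with
    | some p =>
      obtain ⟨C, sub'⟩ := p
      rw [he] at h
      simp only [Option.some.injEq, Prod.mk.injEq] at h
      obtain ⟨rfl, rfl⟩ := h
      obtain ⟨hex, hh, hs⟩ := hP t (by simp) C sub' he
      refine ⟨hex, ?_, ?_⟩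
      · simp [List.map_map, hh, Function.comp_def]
      · simp [hs, Function.comp_def]
    | none =>
      rw [he] at h
      cases he2 : extractL X ts with
      | none => rw [he2] at h; simp at h
      | some p =>
        obtain ⟨Cs', sub'⟩ := p
        rw [he2] at h
        simp only [Option.some.injEq, Prod.mk.injEq] at h
        obtain ⟨rfl, rfl⟩ := h
        obtain ⟨hex, hh, hs⟩ := ih (fun t ht => hP t (by simp [ht])) Cs' sub' he2
        exact ⟨hex, by simp [hh], by simp [hs]⟩

lemma extract_spec (X : V) : ∀ t : PTree V (Option A), ExtractSpec X t := by
  intro t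
  induction t using ptree_ind with
  | hleaf a => intro C sub h; simp [extract] at h
  | hnode Y ts ih =>
    intro C sub h
    rw [extract] at h
    by_cases hYX : Y = X
    · subst hYX
      simp only [if_pos rfl, Option.some.injEq, Prod.mk.injEq] at h
      obtain ⟨rfl, rfl⟩ := h
      exact ⟨⟨ts, rfl⟩, by simp, by simp⟩
    · rw [if_neg hYX] at h
      cases he : extractL X ts with
      | none => rw [he] at h; simp at h
      | some p =>
        obtain ⟨Cs, sub'⟩ := p
        rw [he] at h
        simp only [Option.some.injEq, Prod.mk.injEq] at h
        obtain ⟨rfl, rfl⟩ := h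
        obtain ⟨hex, hh, hs⟩ := extractL_spec_aux X ts ih Cs sub' he
        exact ⟨hex, by simp [hh], by simp [hs]⟩

lemma extractL_spec (X : V) (ts : List (PTree V (Option A))) {Cs sub}
    (h : extractL X ts = some (Cs, sub)) :
    (∃ ts₀, sub = PTree.node X ts₀) ∧ (Cs.map holes).sum = 1 ∧ Cs.map (subst sub) = ts :=
  extractL_spec_aux X ts (fun t _ => extract_spec X t) Cs sub h

end Takahashi4
section Takahashi5
open PTree
variable {V A : Type} [DecidableEq V]

lemma decomp_node (X : V) (ts : List (PTree V (Option A))) :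
    decomp (PTree.node X ts) =
      match extractL X (ts.map fun t => (decomp t).1) with
      | none => (.node X (ts.map fun t => (decomp t).1),
          (ts.map fun t => (decomp t).2).foldr (· ∪ ·) ∅)
      | some (Cs, sub) => (sub, insert (X, PTree.node X Cs)
          ((ts.map fun t => (decomp t).2).foldr (· ∪ ·) ∅)) := by
  rw [decomp]
  simp only [List.map_map, Function.comp_def, attach_map'']

end Takahashi5
section Takahashi6
open PTree
variable {V A : Type} [DecidableEq V] {D : Set (V × List (V ⊕ Option A))}

lemma mem_foldr_union_iff {β : Type _} {l : List (Set β)} {x : β} :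
    x ∈ l.foldr (· ∪ ·) ∅ ↔ ∃ S ∈ l, x ∈ S := by
  induction l with
  | nil => simp
  | cons S l ih => simp [List.foldr, ih]

/-- The simple part of the decomposition is a derivation tree with the same root. -/
lemma decomp_fst_deriv :
    ∀ t : PTree V (Option A), IsDeriv D t →
      IsDeriv D (decomp t).1 ∧ rootLabel (decomp t).1 = rootLabel t := by
  intro t
  induction t using ptree_ind with
  | hleaf a => intro _; rw [decomp]; exact ⟨.leaf a, rfl⟩
  | hnode X ts ih =>
    intro hd
    rw [isDeriv_node_iff] at hd
    set ts' : List (PTree V (Option A)) := ts.map fun t => (decomp t).1 with hts'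
    have hderiv' : IsDeriv D (.node X ts') := by
      rw [isDeriv_node_iff]
      constructor
      · have : ts'.map rootLabel = ts.map rootLabel := by
          rw [hts', List.map_map]
          exact List.map_congr_left fun t ht => (ih t ht (hd.2 t ht)).2
        rw [this]; exact hd.1
      · intro t' ht'
        obtain ⟨t, ht, rfl⟩ := List.mem_map.1 ht'
        exact (ih t ht (hd.2 t ht)).1
    rw [decomp_node]
    cases he : extractL X ts' with
    | none => exact ⟨hderiv', rfl⟩
    | some p =>
      obtain ⟨Cs, sub⟩ := p
      obtain ⟨⟨ts₀, rfl⟩, hh, hs⟩ := extractL_spec X ts' he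
      simp only
      have hsub : subst (PTree.node X ts₀) (PTree.node X Cs) = PTree.node X ts' := by
        simp [hs]
      refine ⟨?_, rfl⟩
      exact isDeriv_of_subst (PTree.node X Cs) (by simp [hh]) (by rw [hsub]; exact hderiv')

def GoodLoop (D : Set (V × List (V ⊕ Option A))) (α : AdjT V A) : Prop :=
  WFAdjunct α ∧
    ∀ U, IsDeriv D U → rootLabel U = .inl α.1 → IsDeriv D (subst U α.2)

/-- All loops in the decomposition of a derivation tree are good. -/
lemma decomp_snd_good :
    ∀ t : PTree V (Option A), IsDeriv D t → ∀ α ∈ (decomp t).2, GoodLoop D α := by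
  intro t
  induction t using ptree_ind with
  | hleaf a => intro _ α hα; rw [decomp] at hα; exact absurd hα (Set.notMem_empty _)
  | hnode X ts ih =>
    intro hd α hα
    have hd' := hd
    rw [isDeriv_node_iff] at hd'
    set ts' : List (PTree V (Option A)) := ts.map fun t => (decomp t).1 with hts'
    have hderiv' : IsDeriv D (.node X ts') := by
      rw [isDeriv_node_iff]
      constructor
      · have : ts'.map rootLabel = ts.map rootLabel := by
          rw [hts', List.map_map]
          exact List.map_congr_left fun t ht => (decomp_fst_deriv t (hd'.2 t ht)).2
        rw [this]; exact hd'.1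
      · intro t' ht'
        obtain ⟨t, ht, rfl⟩ := List.mem_map.1 ht'
        exact (decomp_fst_deriv t (hd'.2 t ht)).1
    have hSS : ∀ β ∈ (ts.map fun t => (decomp t).2).foldr (· ∪ ·) ∅, GoodLoop D β := by
      intro β hβ
      rw [mem_foldr_union_iff] at hβ
      obtain ⟨S, hS, hβS⟩ := hβ
      obtain ⟨t, ht, rfl⟩ := List.mem_map.1 hS
      exact ih t ht (hd'.2 t ht) β hβS
    rw [decomp_node] at hα
    cases he : extractL X ts' with
    | none => rw [he] at hα; exact hSS α hα
    | some p =>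
      obtain ⟨Cs, sub⟩ := p
      rw [he] at hα
      simp only [Set.mem_insert_iff] at hα
      rcases hα with rfl | hα
      · obtain ⟨⟨ts₀, rfl⟩, hh, hs⟩ := extractL_spec X ts' he
        refine ⟨⟨⟨Cs, rfl⟩, by simp [hh]⟩, ?_⟩
        intro U hU hUr
        have hsub : subst (PTree.node X ts₀) (PTree.node X Cs) = PTree.node X ts' := by
          simp [hs]
        exact isDeriv_repl (U := PTree.node X ts₀) (U' := U) (by simp [hUr]) hU (PTree.node X Cs) (by rw [hsub]; exact hderiv')
      · exact hSS α hα

end Takahashi6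
section Takahashi7
open PTree
variable {V A : Type} [DecidableEq V] {D : Set (V × List (V ⊕ Option A))}

omit [DecidableEq V] in
lemma adjoins_preserves {α : AdjT V A} {T T' : PTree V (Option A)}
    (hα : GoodLoop D α) (h : Adjoins α T T') (hT : IsDeriv D T) :
    IsDeriv D T' ∧ rootLabel T' = rootLabel T := by
  obtain ⟨hwf, C, ts, hC1, hTeq, hT'eq⟩ := h
  set U : PTree V (Option A) := .node α.1 ts with hU
  have hUd : IsDeriv D U := isDeriv_of_subst C (by omega) (by rw [hTeq]; exact hT)
  have hU'd : IsDeriv D (subst U α.2) := hα.2 U hUd (by simp [hU])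
  have hroot : rootLabel U = rootLabel (subst U α.2) := by
    obtain ⟨⟨cs, hcs⟩, _⟩ := hwf
    rw [hcs]; simp [hU]
  constructor
  · rw [← hT'eq]
    exact isDeriv_repl hroot hU'd C (by rw [← hTeq] at hT; exact hT)
  · rw [← hT'eq, ← hTeq]
    exact (rootLabel_subst hroot C).symm

omit [DecidableEq V] in
lemma adjChain_preserves :
    ∀ (L : List (AdjT V A)) (T T' : PTree V (Option A)), AdjChain L T T' →
      (∀ α ∈ L, GoodLoop D α) → IsDeriv D T →
      IsDeriv D T' ∧ rootLabel T' = rootLabel T := by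
  intro L
  induction L with
  | nil => intro T T' h _ hT; cases h; exact ⟨hT, rfl⟩
  | cons α L ih =>
    intro T T' h hG hT
    obtain ⟨T₁, h1, h2⟩ := h
    obtain ⟨hd1, hr1⟩ := adjoins_preserves (hG α (by simp)) h1 hT
    obtain ⟨hd2, hr2⟩ := ih T₁ T' h2 (fun β hβ => hG β (by simp [hβ])) hd1
    exact ⟨hd2, hr2.trans hr1⟩

omit [DecidableEq V] in
lemma adjChain_append {L₁ L₂ : List (AdjT V A)} {T T₁ T₂ : PTree V (Option A)}
    (h1 : AdjChain L₁ T T₁) (h2 : AdjChain L₂ T₁ T₂) : AdjChain (L₁ ++ L₂) T T₂ := by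
  induction L₁ generalizing T with
  | nil => cases h1; exact h2
  | cons α L ih =>
    obtain ⟨T', hh, ht⟩ := h1
    exact ⟨T', hh, ih ht⟩

omit [DecidableEq V] in
lemma adjoins_lift {α : AdjT V A} {t t' : PTree V (Option A)} (X : V)
    (l r : List (PTree V (Option A))) (h : Adjoins α t t') :
    Adjoins α (.node X (l ++ t :: r)) (.node X (l ++ t' :: r)) := by
  obtain ⟨hwf, C, us, h1, h2, h3⟩ := h
  refine ⟨hwf, .node X (l.map toAug ++ C :: r.map toAug), us, ?_, ?_, ?_⟩
  · simp [List.map_map, Function.comp_def, List.sum_append, h1]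
  · simp [List.map_map, Function.comp_def, h2]
  · simp [List.map_map, Function.comp_def, h3]

omit [DecidableEq V] in
lemma adjChain_lift {L : List (AdjT V A)} {t t' : PTree V (Option A)} (X : V)
    (l r : List (PTree V (Option A))) (h : AdjChain L t t') :
    AdjChain L (.node X (l ++ t :: r)) (.node X (l ++ t' :: r)) := by
  induction L generalizing t with
  | nil => cases h; rfl
  | cons α L ih =>
    obtain ⟨t₁, h1, h2⟩ := h
    exact ⟨_, adjoins_lift X l r h1, ih h2⟩

omit [DecidableEq V] in
lemma chain_children (X : V) :
    ∀ (ps : List (PTree V (Option A) × PTree V (Option A) × List (AdjT V A)))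
      (pre : List (PTree V (Option A))),
      (∀ p ∈ ps, AdjChain p.2.2 p.1 p.2.1) →
      ∃ L : List (AdjT V A), (∀ α ∈ L, ∃ p ∈ ps, α ∈ p.2.2) ∧
        AdjChain L (.node X (pre ++ ps.map (·.1))) (.node X (pre ++ ps.map (·.2.1))) := by
  intro ps
  induction ps with
  | nil => intro pre _; exact ⟨[], by simp, rfl⟩
  | cons p ps ih =>
    intro pre h
    have c1 : AdjChain p.2.2 (.node X (pre ++ p.1 :: ps.map (·.1)))
        (.node X (pre ++ p.2.1 :: ps.map (·.1))) :=
      adjChain_lift X pre (ps.map (·.1)) (h p (by simp))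
    obtain ⟨L2, hL2mem, hL2⟩ := ih (pre ++ [p.2.1]) (fun q hq => h q (by simp [hq]))
    refine ⟨p.2.2 ++ L2, ?_, ?_⟩
    · intro α hα
      rcases List.mem_append.1 hα with hα | hα
      · exact ⟨p, by simp, hα⟩
      · obtain ⟨q, hq, hq2⟩ := hL2mem α hα
        exact ⟨q, by simp [hq], hq2⟩
    · have e1 : pre ++ p.2.1 :: ps.map (·.1) = (pre ++ [p.2.1]) ++ ps.map (·.1) := by simp
      have e2 : pre ++ (p :: ps).map (·.2.1) = (pre ++ [p.2.1]) ++ ps.map (·.2.1) := by simp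
      rw [e2]
      exact adjChain_append (by rw [← e1]; exact c1) hL2

end Takahashi7
section Takahashi8
open PTree
variable {V A : Type} [DecidableEq V]

lemma attach_map_val' {α β : Type _} (ts : List α) (f : α → β) :
    ts.attach.map (fun x => f x.1) = ts.map f := by simp

/-- The decomposition can be reassembled by a chain of adjunctions. -/
lemma decomp_chain :
    ∀ t : PTree V (Option A), ∃ L : List (AdjT V A),
      (∀ α ∈ L, α ∈ (decomp t).2) ∧ AdjChain L (decomp t).1 t := by
  intro t
  induction t using ptree_ind with
  | hleaf a => exact ⟨[], by rw [decomp]; simp, by rw [decomp]; rfl⟩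
  | hnode X ts ih =>
    classical
    set ps : List (PTree V (Option A) × PTree V (Option A) × List (AdjT V A)) :=
      ts.attach.map (fun ⟨t, ht⟩ => ((decomp t).1, t, (ih t ht).choose)) with hps
    have hps1 : ps.map (·.1) = ts.map fun t => (decomp t).1 :=
      calc ps.map (·.1) = ts.attach.map (fun x => (decomp x.1).1) := by
            rw [hps, List.map_map]
            exact List.map_congr_left fun ⟨t, ht⟩ _ => rfl
        _ = ts.map fun t => (decomp t).1 := attach_map_val' ts (fun t => (decomp t).1)
    have hps2 : ps.map (·.2.1) = ts :=
      calc ps.map (·.2.1) = ts.attach.map (fun x => x.1) := by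
            rw [hps, List.map_map]
            exact List.map_congr_left fun ⟨t, ht⟩ _ => rfl
        _ = ts := by simp
    have hpsc : ∀ p ∈ ps, AdjChain p.2.2 p.1 p.2.1 := by
      intro p hp
      rw [hps] at hp
      obtain ⟨⟨t, ht⟩, _, rfl⟩ := List.mem_map.1 hp
      exact (ih t ht).choose_spec.2
    have hpsm : ∀ p ∈ ps, ∀ α ∈ p.2.2, ∃ t ∈ ts, α ∈ (decomp t).2 := by
      intro p hp α hα
      rw [hps] at hp
      obtain ⟨⟨t, ht⟩, _, rfl⟩ := List.mem_map.1 hp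
      exact ⟨t, ht, (ih t ht).choose_spec.1 α hα⟩
    obtain ⟨L1, hL1mem, hL1⟩ := chain_children X ps [] hpsc
    simp only [List.nil_append, hps1, hps2] at hL1
    have hL1SS : ∀ α ∈ L1, α ∈ (ts.map fun t => (decomp t).2).foldr (· ∪ ·) ∅ := by
      intro α hα
      obtain ⟨p, hp, hαp⟩ := hL1mem α hα
      obtain ⟨t, ht, hαt⟩ := hpsm p hp α hαp
      exact mem_foldr_union_iff.2 ⟨(decomp t).2, List.mem_map_of_mem ht, hαt⟩
    rw [decomp_node]
    cases he : extractL X (ts.map fun t => (decomp t).1) with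
    | none => exact ⟨L1, hL1SS, hL1⟩
    | some p =>
      obtain ⟨Cs, sub⟩ := p
      obtain ⟨⟨ts₀, rfl⟩, hh, hs⟩ := extractL_spec X _ he
      have hstep : Adjoins (X, PTree.node X Cs) (PTree.node X ts₀)
          (PTree.node X (ts.map fun t => (decomp t).1)) := by
        refine ⟨⟨⟨Cs, rfl⟩, by simp [hh]⟩, .leaf (.inr ()), ts₀, by simp, by simp, ?_⟩
        simp [hs]
      refine ⟨(X, PTree.node X Cs) :: L1, ?_, ?_⟩
      · intro α hα
        rcases List.mem_cons.1 hα with rfl | hα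
        · exact Set.mem_insert _ _
        · exact Set.mem_insert_iff.2 (Or.inr (hL1SS α hα))
      · exact ⟨_, hstep, hL1⟩

end Takahashi8


/-- Takahashi's decomposition theorem:
`Trees(G) = ⋃_{T ∈ sTrees(G)} Adj(T, sLoops(G))`. -/
theorem takahashi {V A : Type} [DecidableEq V] [Finite V] [Finite A] (G : CFG V A) :
    TreesSet G = ⋃ T ∈ sTrees G, AdjStar T (sLoops G) := by
  ext T'
  simp only [Set.mem_iUnion]
  constructor
  · intro hT'
    refine ⟨(decomp T').1, ⟨T', hT', rfl⟩, ?_⟩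
    obtain ⟨L, hLmem, hL⟩ := decomp_chain T'
    exact ⟨L, hL, fun α hα => ⟨T', hT', hLmem α hα⟩⟩
  · rintro ⟨T₁, ⟨T₀, hT₀, rfl⟩, L, hL, hLS⟩
    obtain ⟨hd1, hr1⟩ := decomp_fst_deriv T₀ hT₀.2
    have hG : ∀ α ∈ L, GoodLoop G.rules α := by
      intro α hα
      obtain ⟨T₂, hT₂, hα₂⟩ := hLS hα
      exact decomp_snd_good T₂ hT₂.2 α hα₂
    obtain ⟨hd, hr⟩ := adjChain_preserves L _ T' hL hG hd1
    exact ⟨hr.trans (hr1.trans hT₀.1), hd⟩
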